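/- Let F be an algebraically closed field of characteristic different from 2, λ ∈ F, and k a positive integer. Let A be the 2k×2k skew-symmetric tridiagonal matrix with off-diagonal pattern: superdiagonal (1, 0, 1, 0, …), subdiagonal (-1, 0, -1, 0, …); and let B be the 2k×2k skew-symmetric tridiagonal matrix with superdiagonal (λ, 1, λ, 1, …) and subdiagonal (-λ, -1, -λ, -1, …). Then the pair (A, B) is equivalent to (I_k, J_k(λ)) ⊕ (I_k, J_k(λ)). -/

import Mathlib

open Matrix

/-- Equivalence of pairs of square matrices. -/
def PairEquiv {F : Type*} [Field F] {n : ℕ} (A B A' B' : Matrix (Fin n) (Fin n) F) : Prop :=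
  ∃ R S : Matrix (Fin n) (Fin n) F, IsUnit R ∧ IsUnit S ∧ R * A * S = A' ∧ R * B * S = B'

namespace Stmt16Aux

variable (F : Type*) [Field F]

/-- sign `(-1)^n` as an if on parity. -/
def sgn (n : ℕ) : F := if n % 2 = 0 then 1 else -1

def rhoF (k : ℕ) (i : Fin (2 * k)) : Fin (2 * k) :=
  if h : (i : ℕ) < k then ⟨2 * (i : ℕ) + 1, by omega⟩
  else ⟨2 * (2 * k - 1 - (i : ℕ)), by have := i.isLt; omega⟩

def sigF (k : ℕ) (j : Fin (2 * k)) : Fin (2 * k) :=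
  if h : (j : ℕ) < k then ⟨2 * (j : ℕ), by omega⟩
  else ⟨2 * k - 1 - 2 * ((j : ℕ) - k), by have := j.isLt; omega⟩

def eR (k : ℕ) (i : Fin (2 * k)) : F :=
  if (i : ℕ) < k then sgn F ((i : ℕ) + 1) else sgn F ((i : ℕ) - k)

def eS (k : ℕ) (j : Fin (2 * k)) : F :=
  if (j : ℕ) < k then sgn F (j : ℕ) else sgn F ((j : ℕ) - k)

def Rm (k : ℕ) : Matrix (Fin (2 * k)) (Fin (2 * k)) F :=
  Matrix.of fun i p => if p = rhoF k i then eR F k i else 0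

def Sm (k : ℕ) : Matrix (Fin (2 * k)) (Fin (2 * k)) F :=
  Matrix.of fun q j => if q = sigF k j then eS F k j else 0

lemma sandwich (k : ℕ) (M : Matrix (Fin (2 * k)) (Fin (2 * k)) F) (i j : Fin (2 * k)) :
    (Rm F k * M * Sm F k) i j = eR F k i * M (rhoF k i) (sigF k j) * eS F k j := by
  simp [Rm, Sm, Matrix.mul_apply, ite_mul, mul_ite, Finset.sum_ite_eq, Finset.sum_ite_eq',
    Finset.sum_mul, Finset.mul_sum]

lemma RAS (k : ℕ) :
    Rm F k * (Matrix.of fun i j : Fin (2 * k) =>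
        if (j : ℕ) = (i : ℕ) + 1 then (if (i : ℕ) % 2 = 0 then (1 : F) else 0)
        else if (i : ℕ) = (j : ℕ) + 1 then (if (j : ℕ) % 2 = 0 then -1 else 0)
        else 0) * Sm F k = 1 := by
  ext i j
  rw [sandwich]
  obtain ⟨a, ha⟩ := i
  obtain ⟨b, hb⟩ := j
  by_cases hak : a < k <;> by_cases hbk : b < k <;>
    simp only [rhoF, sigF, eR, eS, sgn, Matrix.of_apply, Matrix.one_apply, Fin.mk.injEq,
      Fin.val_mk, hak, hbk, dite_true, dite_false, if_true, if_false, eq_self_iff_true,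
      not_lt] <;>
    split_ifs <;> first | omega | ring

lemma RBS (k : ℕ) (lam : F) :
    Rm F k * (Matrix.of fun i j : Fin (2 * k) =>
        if (j : ℕ) = (i : ℕ) + 1 then (if (i : ℕ) % 2 = 0 then lam else 1)
        else if (i : ℕ) = (j : ℕ) + 1 then (if (j : ℕ) % 2 = 0 then -lam else -1)
        else 0) * Sm F k =
      (Matrix.of fun i j : Fin (2 * k) =>
        if i = j then lam
        else if (j : ℕ) = (i : ℕ) + 1 ∧ (j : ℕ) ≠ k then 1 else 0) := by
  ext i j
  rw [sandwich]
  obtain ⟨a, ha⟩ := i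
  obtain ⟨b, hb⟩ := j
  by_cases hak : a < k <;> by_cases hbk : b < k <;>
    simp only [rhoF, sigF, eR, eS, sgn, Matrix.of_apply, Matrix.one_apply, Fin.mk.injEq,
      Fin.val_mk, hak, hbk, dite_true, dite_false, if_true, if_false, eq_self_iff_true,
      not_lt, ne_eq] <;>
    split_ifs <;> first | omega | ring

end Stmt16Aux

open Stmt16Aux in
/-- The pair `(A, B)` of `2k×2k` skew-symmetric tridiagonal matrices, where `A`
has superdiagonal `(1,0,1,0,…)` and subdiagonal `(-1,0,-1,0,…)`, and `B` has
superdiagonal `(λ,1,λ,1,…)` and subdiagonal `(-λ,-1,-λ,-1,…)`, is equivalent to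
`(I_k, J_k(λ)) ⊕ (I_k, J_k(λ))`. -/
theorem stmt_16 (F : Type*) [Field F] [IsAlgClosed F] (hchar : ringChar F ≠ 2)
    (k : ℕ) (hk : 0 < k) (lam : F) :
    PairEquiv
      (Matrix.of fun i j : Fin (2 * k) =>
        if (j : ℕ) = (i : ℕ) + 1 then (if (i : ℕ) % 2 = 0 then (1 : F) else 0)
        else if (i : ℕ) = (j : ℕ) + 1 then (if (j : ℕ) % 2 = 0 then -1 else 0)
        else 0)
      (Matrix.of fun i j : Fin (2 * k) =>
        if (j : ℕ) = (i : ℕ) + 1 then (if (i : ℕ) % 2 = 0 then lam else 1)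
        else if (i : ℕ) = (j : ℕ) + 1 then (if (j : ℕ) % 2 = 0 then -lam else -1)
        else 0)
      (1 : Matrix (Fin (2 * k)) (Fin (2 * k)) F)
      -- J_k(λ) ⊕ J_k(λ)
      (Matrix.of fun i j : Fin (2 * k) =>
        if i = j then lam
        else if (j : ℕ) = (i : ℕ) + 1 ∧ (j : ℕ) ≠ k then 1 else 0) := by
  refine ⟨Rm F k, Sm F k, ?_, ?_, RAS F k, RBS F k lam⟩
  · have h := congrArg Matrix.det (RAS F k)
    rw [Matrix.det_mul, Matrix.det_mul, Matrix.det_one] at h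
    rw [Matrix.isUnit_iff_isUnit_det]
    exact IsUnit.of_mul_eq_one _ (by rw [← mul_assoc]; exact h)
  · have h := congrArg Matrix.det (RAS F k)
    rw [Matrix.det_mul, Matrix.det_mul, Matrix.det_one] at h
    rw [Matrix.isUnit_iff_isUnit_det]
    exact IsUnit.of_mul_eq_one _ (by rw [mul_comm]; exact h)
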